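/- Let λ ∈ ℝ with λ > 0, λ ≠ 1, λ ≠ 4, set β = (1 − λ)/3, and let (P_{p,q})_{p,q∈ℕ} ⊆ ℝ[Z,W] be the recursively defined deltoid eigenpolynomials. For n ∈ ℕ set c_n = (−3)^n (Π_{j=0}^{n−1} (β − j)) / n!. Then for every (z,w) ∈ ℝ² and every n ∈ ℕ, (1/n!) times the n-th derivative at X = 0 of the function X ↦ (1 − 3wX + 3zX² − X³)^β equals c_n · P_{0,n}(z,w) (evaluation of the polynomial P_{0,n} at (Z,W) = (z,w)). In other words, (1 − 3wX + 3zX² − X³)^β = Σ_n c_n P_{0,n}(z,w) X^n is a generating function for the family P_{0,n}. -/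

import Mathlib

noncomputable section

open MvPolynomial

/-- The coefficient `a₁(λ,p)`; it vanishes for `p = 0`. -/
def a1 (lam : ℝ) (p : ℕ) : ℝ :=
  -((p : ℝ) * (3 * p + 2 * lam - 5)) / ((lam + 3 * p - 1) * (lam + 3 * p - 4))

/-- The coefficient `a₂(λ,p,q)`; it vanishes for `q = 0`. -/
def a2 (lam : ℝ) (p q : ℕ) : ℝ :=
  -((q : ℝ) * (3 * q + 2 * lam - 5) * (lam + 3 * ((p : ℝ) + q) - 1) * (lam + p + q - 2)) /
    ((lam + 3 * q - 1) * (2 * lam + 3 * ((p : ℝ) + q) - 5) *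
      (2 * lam + 3 * ((p : ℝ) + q) - 2) * (lam + 3 * q - 4))

open Topology
open scoped ContDiff

section AuxAnalysis

variable {s : Set ℝ}

lemma itd_zero (n : ℕ) : iteratedDeriv n (fun _ : ℝ => (0:ℝ)) = fun _ => 0 := by
  induction n with
  | zero => simp [iteratedDeriv_zero]
  | succ n ih => rw [iteratedDeriv_succ, ih]; funext x; simp

lemma itd_diffAt (hs : IsOpen s) {g : ℝ → ℝ} (hg : ContDiffOn ℝ ∞ g s) (n : ℕ)
    {x : ℝ} (hx : x ∈ s) : DifferentiableAt ℝ (iteratedDeriv n g) x := by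
  have h1 : DifferentiableOn ℝ (iteratedDerivWithin n g s) s :=
    hg.differentiableOn_iteratedDerivWithin (by exact_mod_cast ENat.coe_lt_top n)
      hs.uniqueDiffOn
  have h2 : iteratedDerivWithin n g s =ᶠ[𝓝 x] iteratedDeriv n g := by
    filter_upwards [hs.mem_nhds hx] with y hy
    simp only [iteratedDerivWithin_eq_iteratedFDerivWithin, iteratedDeriv_eq_iteratedFDeriv]
    rw [iteratedFDerivWithin_of_isOpen n hs hy]
  exact ((h1 x hx).differentiableAt (hs.mem_nhds hx)).congr_of_eventuallyEq h2.symm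

lemma itd_add (hs : IsOpen s) {g h : ℝ → ℝ} (hg : ContDiffOn ℝ ∞ g s)
    (hh : ContDiffOn ℝ ∞ h s) (n : ℕ) :
    ∀ x ∈ s, iteratedDeriv n (fun y => g y + h y) x
      = iteratedDeriv n g x + iteratedDeriv n h x := by
  induction n with
  | zero => intro x hx; simp
  | succ n ih =>
    intro x hx
    have heq : iteratedDeriv n (fun y => g y + h y)
        =ᶠ[𝓝 x] fun y => iteratedDeriv n g y + iteratedDeriv n h y := by
      filter_upwards [hs.mem_nhds hx] with y hy using ih y hy
    rw [iteratedDeriv_succ, heq.deriv_eq, iteratedDeriv_succ, iteratedDeriv_succ,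
      deriv_fun_add (itd_diffAt hs hg n hx) (itd_diffAt hs hh n hx)]

lemma itd_cmul (hs : IsOpen s) {g : ℝ → ℝ} (hg : ContDiffOn ℝ ∞ g s) (a : ℝ) (n : ℕ) :
    ∀ x ∈ s, iteratedDeriv n (fun y => a * g y) x = a * iteratedDeriv n g x := by
  induction n with
  | zero => intro x hx; simp
  | succ n ih =>
    intro x hx
    have heq : iteratedDeriv n (fun y => a * g y)
        =ᶠ[𝓝 x] fun y => a * iteratedDeriv n g y := by
      filter_upwards [hs.mem_nhds hx] with y hy using ih y hy
    rw [iteratedDeriv_succ, heq.deriv_eq, iteratedDeriv_succ,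
      deriv_const_mul a (itd_diffAt hs hg n hx)]

lemma itd_xmul (hs : IsOpen s) {g : ℝ → ℝ} (hg : ContDiffOn ℝ ∞ g s) (n : ℕ) :
    ∀ x ∈ s, iteratedDeriv n (fun y => y * g y) x
      = x * iteratedDeriv n g x + n * iteratedDeriv (n - 1) g x := by
  induction n with
  | zero => intro x hx; simp
  | succ n ih =>
    intro x hx
    have heq : iteratedDeriv n (fun y => y * g y)
        =ᶠ[𝓝 x] fun y => y * iteratedDeriv n g y + (n : ℝ) * iteratedDeriv (n - 1) g y := by
      filter_upwards [hs.mem_nhds hx] with y hy using ih y hy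
    have d1 : DifferentiableAt ℝ (iteratedDeriv n g) x := itd_diffAt hs hg n hx
    have d2 : DifferentiableAt ℝ (iteratedDeriv (n - 1) g) x := itd_diffAt hs hg (n - 1) hx
    rw [iteratedDeriv_succ, heq.deriv_eq,
      deriv_fun_add ((differentiableAt_fun_id).fun_mul d1) (d2.const_mul _),
      deriv_fun_mul differentiableAt_fun_id d1, deriv_const_mul _ d2, deriv_id'']
    rw [← iteratedDeriv_succ]
    rcases Nat.eq_zero_or_pos n with rfl | hn
    · simp [iteratedDeriv_succ]; ring
    · rw [← iteratedDeriv_succ, Nat.sub_add_cancel hn, Nat.add_sub_cancel]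
      push_cast
      ring

end AuxAnalysis

set_option maxHeartbeats 4000000 in
theorem stmt_17 (lam : ℝ) (hpos : 0 < lam) (hne1 : lam ≠ 1) (hne4 : lam ≠ 4)
    (β : ℝ) (hβ : β = (1 - lam) / 3)
    (P : ℕ → ℕ → MvPolynomial (Fin 2) ℝ)
    (h00 : P 0 0 = 1)
    (hrecZ : ∀ p q, P (p + 1) q
      = X 0 * P p q + C (a1 lam p) * P (p - 1) (q + 1) + C (a2 lam p q) * P p (q - 1))
    (hrecW0 : ∀ q, P 0 (q + 1) = X 1 * P 0 q + C (a1 lam q) * P 1 (q - 1))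
    (c : ℕ → ℝ)
    (hc : ∀ n : ℕ, c n = (-3 : ℝ) ^ n * (∏ j ∈ Finset.range n, (β - j)) / n.factorial) :
    ∀ (z w : ℝ) (n : ℕ),
      iteratedDeriv n (fun X : ℝ => (1 - 3 * w * X + 3 * z * X ^ 2 - X ^ 3) ^ β) 0
          / n.factorial
        = c n * MvPolynomial.eval ![z, w] (P 0 n) := by
  intro z w
  -- basic facts about a1, a2 at 0
  have ha10 : a1 lam 0 = 0 := by simp [a1]
  have ha20 : a2 lam 0 0 = 0 := by simp [a2]
  -- the evaluated polynomials
  set E : ℕ → ℝ := fun n => MvPolynomial.eval ![z, w] (P 0 n) with hE_def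
  have hE0 : E 0 = 1 := by simp [hE_def, h00]
  have hE : ∀ q : ℕ, E (q + 1)
      = w * E q + a1 lam q * z * E (q - 1) + a1 lam q * a2 lam 0 (q - 1) * E (q - 2) := by
    intro q
    have h2 := hrecZ 0 (q - 1)
    norm_num [ha10] at h2
    have h1 := hrecW0 q
    rw [h2] at h1
    have : q - 1 - 1 = q - 2 := by omega
    rw [this] at h1
    simp only [hE_def, h1, eval_add, eval_mul, eval_C, eval_X]
    have : (![z, w] : Fin 2 → ℝ) 1 = w := rfl
    rw [this]
    have : (![z, w] : Fin 2 → ℝ) 0 = z := rfl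
    rw [this]
    ring
  -- the normalized coefficients d n = n! * c n
  set d : ℕ → ℝ := fun n => (n.factorial : ℝ) * c n with hd_def
  have hdprod : ∀ n : ℕ, d n = (-3 : ℝ) ^ n * ∏ j ∈ Finset.range n, (β - j) := by
    intro n
    have hfac : ((n.factorial : ℝ)) ≠ 0 := Nat.cast_ne_zero.2 n.factorial_ne_zero
    simp only [hd_def, hc n]
    field_simp
  have hd0 : d 0 = 1 := by simp [hdprod 0]
  have hd : ∀ m : ℕ, d (m + 1) = 3 * ((m : ℝ) - β) * d m := by
    intro m
    rw [hdprod, hdprod, Finset.prod_range_succ, pow_succ]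
    ring
  -- nonzero facts
  have hkc : ∀ k : ℕ, (0:ℝ) ≤ (k:ℝ) := fun k => Nat.cast_nonneg k
  have hlm1 : lam - 1 ≠ 0 := sub_ne_zero.mpr hne1
  -- the S-side recurrence
  have hS : ∀ m : ℕ, d (m + 1) * E (m + 1)
      = 3 * w * ((m : ℝ) - β) * (d m * E m)
        + 3 * z * (m : ℝ) * (2 * β - (m : ℝ) + 1) * (d (m - 1) * E (m - 1))
        + (m : ℝ) * ((m : ℝ) - 1) * ((m : ℝ) - 2 - 3 * β) * (d (m - 2) * E (m - 2)) := by
    intro m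
    match m with
    | 0 =>
      have e1 : E 1 = w * E 0 := by
        have := hE 0
        rw [ha10] at this
        rw [this]; ring
      rw [e1, hd 0]
      push_cast
      ring
    | 1 =>
      have e2 : E 2 = w * E 1 + a1 lam 1 * z * E 0 := by
        have h := hE 1
        norm_num [ha20] at h
        rw [h]
      have h2 : lam + 2 ≠ 0 := by nlinarith
      have hb1 : 3 * β - 3 ≠ 0 := by rw [hβ]; intro h; apply h2; linarith
      have ha11 : a1 lam 1 = 2 / (3 * β - 3) := by
        have hden1 : lam + 3 * ((1:ℕ):ℝ) - 1 ≠ 0 := by push_cast; nlinarith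
        have hden2 : lam + 3 * ((1:ℕ):ℝ) - 4 ≠ 0 := by
          push_cast; intro h; apply hne1; linarith
        simp only [a1]
        rw [hβ] at hb1 ⊢
        rw [div_eq_div_iff (mul_ne_zero hden1 hden2) hb1]
        push_cast
        ring
      have hd1v : d 1 = -3 * β := by
        have h := hd 0
        rw [hd0] at h
        rw [h]; push_cast; ring
      have hd2v : d 2 = (3 - 3 * β) * (-3 * β) := by
        have h := hd 1
        rw [hd1v] at h
        rw [h]; push_cast; ring
      simp only [show (1:ℕ) - 1 = 0 from rfl, show (1:ℕ) - 2 = 0 from rfl,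
        show (1:ℕ) + 1 = 2 from rfl]
      rw [e2, hd2v, hd1v, hd0, hE0, ha11]
      have hb1' : β - 1 ≠ 0 := by intro h; apply hb1; linarith
      field_simp
      ring
    | (k + 2) =>
      have hk0 : (0:ℝ) ≤ (k:ℝ) := hkc k
      have e := hE (k + 2)
      simp only [show k + 2 - 1 = k + 1 from rfl, show k + 2 - 2 = k from rfl,
        show k + 2 + 1 = k + 3 from rfl] at e ⊢
      have n1 : lam + 3 * ((k:ℝ) + 2) - 1 ≠ 0 := by nlinarith
      have n2 : lam + 3 * ((k:ℝ) + 2) - 4 ≠ 0 := by nlinarith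
      have n3 : lam + 3 * ((k:ℝ) + 1) - 1 ≠ 0 := by nlinarith
      have n4 : lam + 3 * ((k:ℝ) + 1) - 4 ≠ 0 := by
        rcases Nat.eq_zero_or_pos k with rfl | hk
        · push_cast; intro h; apply hne1; linarith
        · have hk1 : (1:ℝ) ≤ (k:ℝ) := by exact_mod_cast hk
          nlinarith
      have n5 : 2 * lam + 3 * ((k:ℝ) + 1) - 5 ≠ 0 := by
        rcases Nat.eq_zero_or_pos k with rfl | hk
        · push_cast; intro h; apply hne1; linarith
        · have hk1 : (1:ℝ) ≤ (k:ℝ) := by exact_mod_cast hk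
          nlinarith
      have n6 : 2 * lam + 3 * ((k:ℝ) + 1) - 2 ≠ 0 := by nlinarith
      have kB : (3 * (((k:ℝ) + 2) - β)) * (3 * (((k:ℝ) + 1) - β)) * a1 lam (k + 2)
          = 3 * ((k:ℝ) + 2) * (2 * β - ((k:ℝ) + 2) + 1) := by
        simp only [a1]
        push_cast
        rw [hβ]
        field_simp
        ring
      have kC : (3 * (((k:ℝ) + 2) - β)) * (3 * (((k:ℝ) + 1) - β)) * (3 * ((k:ℝ) - β))
            * (a1 lam (k + 2) * a2 lam 0 (k + 1))
          = ((k:ℝ) + 2) * (((k:ℝ) + 2) - 1) * (((k:ℝ) + 2) - 2 - 3 * β) := by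
        simp only [a1, a2]
        push_cast [zero_add]
        rw [hβ]
        rw [div_mul_div_comm, mul_div_assoc']
        rw [div_eq_iff (mul_ne_zero (mul_ne_zero n1 n2)
          (mul_ne_zero (mul_ne_zero (mul_ne_zero n3 n5) n6) n4))]
        ring
      have dd1 : d (k + 3) = 3 * (((k:ℝ) + 2) - β) * d (k + 2) := by
        have h := hd (k + 2); push_cast at h; exact h
      have dd2 : d (k + 2) = 3 * (((k:ℝ) + 1) - β) * d (k + 1) := by
        have h := hd (k + 1); push_cast at h; exact h
      have dd3 : d (k + 1) = 3 * ((k:ℝ) - β) * d k := by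
        have h := hd k; push_cast at h; exact h
      rw [e, dd1, dd2, dd3]
      push_cast
      linear_combination (z * E (k + 1) * (3 * ((k:ℝ) - β)) * d k) * kB + (E k * d k) * kC
  -- analysis side
  set u : ℝ → ℝ := fun x => 1 - 3 * w * x + 3 * z * x ^ 2 - x ^ 3 with hu_def
  set f : ℝ → ℝ := fun x => (1 - 3 * w * x + 3 * z * x ^ 2 - x ^ 3) ^ β with hf_def
  have hfu : ∀ x : ℝ, f x = u x ^ β := fun x => rfl
  set S : Set ℝ := {x : ℝ | 0 < u x} with hS_def
  have hu : ContDiff ℝ ∞ u := by rw [hu_def]; fun_prop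
  have hSopen : IsOpen S := isOpen_lt continuous_const hu.continuous
  have h0S : (0:ℝ) ∈ S := by
    rw [hS_def]
    show (0:ℝ) < u 0
    simp [hu_def]
  have hmemS : ∀ x : ℝ, x ∈ S → 0 < u x := fun x hx => hx
  have hfc : ContDiffOn ℝ ∞ f S := by
    intro x hx
    exact (hu.contDiffAt.contDiffWithinAt).rpow_const_of_ne (ne_of_gt (hmemS x hx))
  have hGc : ContDiffOn ℝ ∞ (deriv f) S := hfc.deriv_of_isOpen hSopen (by simp)
  have hu' : ∀ x : ℝ, HasDerivAt u (-(3*w) + 3*z*(2*x) - 3*x^2) x := by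
    intro x
    have hid : HasDerivAt (fun y : ℝ => y) 1 x := hasDerivAt_id x
    have h2 : HasDerivAt (fun y : ℝ => y^2) (2*x) x := by simpa using hasDerivAt_pow 2 x
    have h3 : HasDerivAt (fun y : ℝ => y^3) (3*x^2) x := by simpa using hasDerivAt_pow 3 x
    have h1 := (((hasDerivAt_const x (1:ℝ)).sub (hid.const_mul (3*w))).add
      (h2.const_mul (3*z))).sub h3
    rw [hu_def]
    refine h1.congr_deriv ?_
    ring
  have hfd : ∀ x ∈ S, HasDerivAt f ((-(3*w) + 3*z*(2*x) - 3*x^2) * β * u x ^ (β - 1)) x := by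
    intro x hx
    exact (hu' x).rpow_const (Or.inl (ne_of_gt (hmemS x hx)))
  have hODE : ∀ x ∈ S, u x * deriv f x - β * (-(3*w) + 3*z*(2*x) - 3*x^2) * f x = 0 := by
    intro x hx
    have h0 : u x ≠ 0 := ne_of_gt (hmemS x hx)
    rw [(hfd x hx).deriv, hfu x]
    have hpow : u x ^ β = u x ^ (β - 1) * u x := by
      rw [← Real.rpow_add_one h0 (β - 1)]
      norm_num
    rw [hpow]
    ring
  have hbig : ∀ n : ℕ, iteratedDeriv n
      (fun x => u x * deriv f x - β * (-(3*w) + 3*z*(2*x) - 3*x^2) * f x) 0 = 0 := by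
    intro n
    have hev : (fun x => u x * deriv f x - β * (-(3*w) + 3*z*(2*x) - 3*x^2) * f x)
        =ᶠ[𝓝 (0:ℝ)] (fun _ => 0) := by
      filter_upwards [hSopen.mem_nhds h0S] with y hy using hODE y hy
    rw [Filter.EventuallyEq.iteratedDeriv_eq n hev, itd_zero]
  have c1 : ContDiffOn ℝ ∞ (fun x : ℝ => x * deriv f x) S := contDiffOn_id.mul hGc
  have c2 : ContDiffOn ℝ ∞ (fun x : ℝ => x * (x * deriv f x)) S := contDiffOn_id.mul c1
  have c3 : ContDiffOn ℝ ∞ (fun x : ℝ => x * (x * (x * deriv f x))) S := contDiffOn_id.mul c2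
  have c5 : ContDiffOn ℝ ∞ (fun x : ℝ => x * f x) S := contDiffOn_id.mul hfc
  have c6 : ContDiffOn ℝ ∞ (fun x : ℝ => x * (x * f x)) S := contDiffOn_id.mul c5
  have t6 : ContDiffOn ℝ ∞ (fun x : ℝ => (3*β) * (x * (x * f x))) S := contDiffOn_const.mul c6
  have t5 : ContDiffOn ℝ ∞ (fun x : ℝ =>
      (-(6*β*z)) * (x * f x) + (3*β) * (x * (x * f x))) S := (contDiffOn_const.mul c5).add t6
  have t4 : ContDiffOn ℝ ∞ (fun x : ℝ => (3*β*w) * f x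
      + ((-(6*β*z)) * (x * f x) + (3*β) * (x * (x * f x)))) S := (contDiffOn_const.mul hfc).add t5
  have t3 : ContDiffOn ℝ ∞ (fun x : ℝ => (-1 : ℝ) * (x * (x * (x * deriv f x)))
      + ((3*β*w) * f x + ((-(6*β*z)) * (x * f x) + (3*β) * (x * (x * f x))))) S :=
    (contDiffOn_const.mul c3).add t4
  have t2 : ContDiffOn ℝ ∞ (fun x : ℝ => (3*z) * (x * (x * deriv f x))
      + ((-1 : ℝ) * (x * (x * (x * deriv f x)))
      + ((3*β*w) * f x + ((-(6*β*z)) * (x * f x) + (3*β) * (x * (x * f x)))))) S :=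
    (contDiffOn_const.mul c2).add t3
  have t1 : ContDiffOn ℝ ∞ (fun x : ℝ => (-(3*w)) * (x * deriv f x)
      + ((3*z) * (x * (x * deriv f x)) + ((-1 : ℝ) * (x * (x * (x * deriv f x)))
      + ((3*β*w) * f x + ((-(6*β*z)) * (x * f x) + (3*β) * (x * (x * f x))))))) S :=
    (contDiffOn_const.mul c1).add t2
  have hdecomp : (fun x => u x * deriv f x - β * (-(3*w) + 3*z*(2*x) - 3*x^2) * f x)
      = fun x : ℝ => deriv f x + ((-(3*w)) * (x * deriv f x)
          + ((3*z) * (x * (x * deriv f x)) + ((-1 : ℝ) * (x * (x * (x * deriv f x)))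
          + ((3*β*w) * f x + ((-(6*β*z)) * (x * f x) + (3*β) * (x * (x * f x))))))) := by
    funext x
    simp only [hu_def]
    ring
  have hexp : ∀ n : ℕ,
      iteratedDeriv n (fun x => u x * deriv f x - β * (-(3*w) + 3*z*(2*x) - 3*x^2) * f x) 0
      = iteratedDeriv n (deriv f) 0
        + ((-(3*w)) * iteratedDeriv n (fun x : ℝ => x * deriv f x) 0
        + ((3*z) * iteratedDeriv n (fun x : ℝ => x * (x * deriv f x)) 0
        + ((-1 : ℝ) * iteratedDeriv n (fun x : ℝ => x * (x * (x * deriv f x))) 0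
        + ((3*β*w) * iteratedDeriv n f 0
        + ((-(6*β*z)) * iteratedDeriv n (fun x : ℝ => x * f x) 0
        + (3*β) * iteratedDeriv n (fun x : ℝ => x * (x * f x)) 0))))) := by
    intro n
    rw [hdecomp]
    rw [itd_add hSopen hGc t1 n 0 h0S]
    rw [itd_add hSopen (contDiffOn_const.mul c1) t2 n 0 h0S]
    rw [itd_add hSopen (contDiffOn_const.mul c2) t3 n 0 h0S]
    rw [itd_add hSopen (contDiffOn_const.mul c3) t4 n 0 h0S]
    rw [itd_add hSopen (contDiffOn_const.mul hfc) t5 n 0 h0S]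
    rw [itd_add hSopen (contDiffOn_const.mul c5) t6 n 0 h0S]
    rw [itd_cmul hSopen c1 (-(3*w)) n 0 h0S]
    rw [itd_cmul hSopen c2 (3*z) n 0 h0S]
    rw [itd_cmul hSopen c3 (-1 : ℝ) n 0 h0S]
    rw [itd_cmul hSopen hfc (3*β*w) n 0 h0S]
    rw [itd_cmul hSopen c5 (-(6*β*z)) n 0 h0S]
    rw [itd_cmul hSopen c6 (3*β) n 0 h0S]
  have vx : ∀ (g : ℝ → ℝ), ContDiffOn ℝ ∞ g S → ∀ n : ℕ,
      iteratedDeriv n (fun y : ℝ => y * g y) 0 = n * iteratedDeriv (n - 1) g 0 := by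
    intro g hg n
    have := itd_xmul hSopen hg n 0 h0S
    simpa using this
  have v1 : ∀ n : ℕ, iteratedDeriv n (fun x : ℝ => x * deriv f x) 0
      = n * iteratedDeriv (n - 1) (deriv f) 0 := vx _ hGc
  have v2 : ∀ n : ℕ, iteratedDeriv n (fun x : ℝ => x * (x * deriv f x)) 0
      = n * ((n - 1 : ℕ) : ℝ) * iteratedDeriv (n - 2) (deriv f) 0 := by
    intro n
    rw [vx _ c1 n, v1 (n - 1), show n - 1 - 1 = n - 2 from by omega]
    ring
  have v3 : ∀ n : ℕ, iteratedDeriv n (fun x : ℝ => x * (x * (x * deriv f x))) 0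
      = n * ((n - 1 : ℕ) : ℝ) * ((n - 2 : ℕ) : ℝ) * iteratedDeriv (n - 3) (deriv f) 0 := by
    intro n
    rw [vx _ c2 n, v2 (n - 1), show n - 1 - 1 = n - 2 from by omega,
      show n - 1 - 2 = n - 3 from by omega]
    ring
  have v5 : ∀ n : ℕ, iteratedDeriv n (fun x : ℝ => x * f x) 0
      = n * iteratedDeriv (n - 1) f 0 := vx _ hfc
  have v6 : ∀ n : ℕ, iteratedDeriv n (fun x : ℝ => x * (x * f x)) 0
      = n * ((n - 1 : ℕ) : ℝ) * iteratedDeriv (n - 2) f 0 := by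
    intro n
    rw [vx _ c5 n, v5 (n - 1), show n - 1 - 1 = n - 2 from by omega]
    ring
  have hshift : ∀ m : ℕ, iteratedDeriv m (deriv f) 0 = iteratedDeriv (m + 1) f 0 :=
    fun m => by rw [iteratedDeriv_succ']
  -- the master recurrence on the analytic side
  have hT : ∀ m : ℕ, iteratedDeriv (m + 1) f 0
      = 3 * w * ((m : ℝ) - β) * iteratedDeriv m f 0
        + 3 * z * (m : ℝ) * (2 * β - (m : ℝ) + 1) * iteratedDeriv (m - 1) f 0
        + (m : ℝ) * ((m : ℝ) - 1) * ((m : ℝ) - 2 - 3 * β) * iteratedDeriv (m - 2) f 0 := by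
    intro m
    have h := hexp m
    rw [hbig m, v1 m, v2 m, v3 m, v5 m, v6 m] at h
    match m with
    | 0 =>
      rw [hshift 0] at h
      push_cast at h ⊢
      linear_combination -h
    | 1 =>
      simp only [show (1:ℕ) - 1 = 0 from rfl, show (1:ℕ) - 2 = 0 from rfl,
        show (1:ℕ) - 3 = 0 from rfl] at h ⊢
      rw [hshift 1, hshift 0] at h
      push_cast at h ⊢
      linear_combination -h
    | 2 =>
      simp only [show (2:ℕ) - 1 = 1 from rfl, show (2:ℕ) - 2 = 0 from rfl,
        show (2:ℕ) - 3 = 0 from rfl, show (1:ℕ) + 1 = 2 from rfl,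
        show (2:ℕ) + 1 = 3 from rfl] at h ⊢
      rw [hshift 2, hshift 1, hshift 0] at h
      simp only [show (1:ℕ) + 1 = 2 from rfl, show (2:ℕ) + 1 = 3 from rfl,
        show (0:ℕ) + 1 = 1 from rfl] at h
      push_cast at h ⊢
      linear_combination -h
    | (k + 3) =>
      simp only [show k + 3 - 1 = k + 2 from rfl, show k + 3 - 2 = k + 1 from rfl,
        show k + 3 - 3 = k from rfl, show k + 3 + 1 = k + 4 from rfl] at h ⊢
      rw [hshift (k + 3), hshift (k + 2), hshift (k + 1), hshift k] at h
      simp only [show k + 3 + 1 = k + 4 from rfl, show k + 2 + 1 = k + 3 from rfl,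
        show k + 1 + 1 = k + 2 from rfl, show k + 0 + 1 = k + 1 from rfl] at h
      push_cast at h ⊢
      linear_combination -h
  -- initial value
  have hT0 : iteratedDeriv 0 f 0 = d 0 * E 0 := by
    rw [iteratedDeriv_zero, hfu 0, hd0, hE0]
    have : u 0 = 1 := by simp [hu_def]
    rw [this, Real.one_rpow]
    norm_num
  -- conclusion by strong induction
  have key : ∀ n : ℕ, iteratedDeriv n f 0 = d n * E n := by
    intro n
    induction n using Nat.strong_induction_on with
    | _ n ih =>
      match n with
      | 0 => exact hT0
      | (m + 1) =>
        rw [hT m, ih m (by omega), ih (m - 1) (by omega), ih (m - 2) (by omega), ← hS m]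
  intro n
  have hfac : ((n.factorial : ℝ)) ≠ 0 := Nat.cast_ne_zero.2 n.factorial_ne_zero
  rw [key n, div_eq_iff hfac, hd_def]
  ring

end
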